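/- If G is the complement of a perfect matching on n vertices (n even, n ≥ 2), i.e., the graph obtained from K_n by deleting a perfect matching, then si(G) ≥ log₂(n − 1). -/
import Mathlib


/-- `(a, b, L)` is a `d`-simultaneous interval representation of `G`:
each vertex `v` gets a nonempty open interval `(a v, b v)` and a label set
`L v ⊆ {1,…,d}`, and distinct vertices are adjacent iff both their intervals
and their label sets intersect. -/
def IsSIRep {V : Type*} (G : SimpleGraph V) (d : ℕ)
    (a b : V → ℝ) (L : V → Finset (Fin d)) : Prop :=
  (∀ v, a v < b v) ∧
  ∀ u v : V, u ≠ v →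
    (G.Adj u v ↔ (Set.Ioo (a u) (b u) ∩ Set.Ioo (a v) (b v)).Nonempty ∧
      (L u ∩ L v).Nonempty)

/-- The simultaneous interval number of `G`. -/
noncomputable def si {V : Type*} (G : SimpleGraph V) : ℕ :=
  sInf {d | ∃ a b L, IsSIRep G d a b L}

/-- The complement of a perfect matching on `2k` vertices: the pairs
`(i,0),(i,1)` are the non-edges. -/
def complementOfMatching (k : ℕ) : SimpleGraph (Fin k × Fin 2) :=
  SimpleGraph.fromRel (fun u v => u.1 ≠ v.1)

lemma adj_iff' {k : ℕ} (u v : Fin k × Fin 2) :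
    (complementOfMatching k).Adj u v ↔ u.1 ≠ v.1 := by
  unfold complementOfMatching
  rw [SimpleGraph.fromRel_adj]
  constructor
  · rintro ⟨-, h | h⟩
    · exact h
    · exact h.symm
  · intro h
    exact ⟨fun e => h (by rw [e]), Or.inl h⟩

lemma cross_lt' {p q r s : ℝ} (h : (Set.Ioo p q ∩ Set.Ioo r s).Nonempty) :
    r < q ∧ p < s := by
  obtain ⟨x, ⟨h1, h2⟩, h3, h4⟩ := h
  exact ⟨lt_trans h3 h2, lt_trans h1 h4⟩

lemma disj_cases' {p q r s : ℝ} (hpq : p < q) (hrs : r < s)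
    (h : ¬ (Set.Ioo p q ∩ Set.Ioo r s).Nonempty) : q ≤ r ∨ s ≤ p := by
  by_contra hc
  push_neg at hc
  refine h ?_
  rw [Set.Ioo_inter_Ioo, Set.nonempty_Ioo]
  exact max_lt (lt_min hpq hc.2) (lt_min hc.1 hrs)

lemma fin2_eq_of_ne {x y z : Fin 2} (h1 : x ≠ z) (h2 : y ≠ z) : x = y := by omega

lemma otherF_ne (x : Fin 2) : x ≠ (if x = 0 then 1 else 0) := by
  fin_cases x <;> decide

lemma rep_bound {k d : ℕ} (hk : 2 ≤ k) (A B : Fin k × Fin 2 → ℝ)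
    (L : Fin k × Fin 2 → Finset (Fin d))
    (h : IsSIRep (complementOfMatching k) d A B L) : 2 * k - 1 ≤ 2 ^ d := by
  classical
  obtain ⟨hab, hiff⟩ := h
  set I : Fin k × Fin 2 → Set ℝ := fun v => Set.Ioo (A v) (B v) with hIdef
  have hcross : ∀ u v : Fin k × Fin 2, u.1 ≠ v.1 →
      (I u ∩ I v).Nonempty ∧ (L u ∩ L v).Nonempty := fun u v h =>
    (hiff u v (fun e => h (congrArg Prod.fst e))).1 ((adj_iff' u v).2 h)
  have hpair : ∀ u v : Fin k × Fin 2, u ≠ v → u.1 = v.1 →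
      ¬((I u ∩ I v).Nonempty ∧ (L u ∩ L v).Nonempty) := by
    intro u v hne h1 hc
    have := (hiff u v hne).2 hc
    rw [adj_iff'] at this
    exact this h1
  have step1 : ∀ u u' v v' : Fin k × Fin 2, u.1 = u'.1 → v.1 = v'.1 → u.1 ≠ v.1 →
      ¬(I u ∩ I u').Nonempty → ¬(I v ∩ I v').Nonempty → False := by
    intro u u' v v' h1 h2 h3 hd1 hd2
    have c1 := cross_lt' (hcross u v h3).1
    have c2 := cross_lt' (hcross u v' (h2 ▸ h3)).1
    have c3 := cross_lt' (hcross u' v (h1 ▸ h3)).1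
    have c4 := cross_lt' (hcross u' v' (h1 ▸ h2 ▸ h3)).1
    have d1 := disj_cases' (hab u) (hab u') hd1
    have d2 := disj_cases' (hab v) (hab v') hd2
    obtain ⟨c11, c12⟩ := c1
    obtain ⟨c21, c22⟩ := c2
    obtain ⟨c31, c32⟩ := c3
    obtain ⟨c41, c42⟩ := c4
    rcases d1 with d1 | d1 <;> rcases d2 with d2 | d2 <;> linarith
  have collision : ∀ u v : Fin k × Fin 2, u ≠ v → L u = L v →
      u.1 = v.1 ∧ ¬(I u ∩ I v).Nonempty := by
    intro u v hne hL
    have h1 : u.1 = v.1 := by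
      by_contra hne1
      set u' : Fin k × Fin 2 := (u.1, if u.2 = 0 then 1 else 0) with hu'
      have huu' : u ≠ u' := fun e => (otherF_ne u.2) (congrArg Prod.snd e)
      rcases not_and_or.mp (hpair u u' huu' rfl) with hInt | hLab
      · set v' : Fin k × Fin 2 := (v.1, if v.2 = 0 then 1 else 0) with hv'
        have hvv' : v ≠ v' := fun e => (otherF_ne v.2) (congrArg Prod.snd e)
        rcases not_and_or.mp (hpair v v' hvv' rfl) with hInt2 | hLab2
        · exact step1 u u' v v' rfl rfl hne1 hInt hInt2
        · have := (hcross u v' hne1).2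
          rw [hL] at this
          exact hLab2 this
      · have := (hcross v u' (Ne.symm hne1)).2
        rw [← hL] at this
        exact hLab this
    refine ⟨h1, fun hInt => ?_⟩
    have hLab : ¬(L u ∩ L v).Nonempty := fun hl => hpair u v hne h1 ⟨hInt, hl⟩
    rw [hL, Finset.inter_self] at hLab
    obtain ⟨j, hj⟩ := Fintype.exists_ne_of_one_lt_card
      (by simp only [Fintype.card_fin]; omega) v.1
    obtain ⟨x, hx⟩ := (hcross v (j, 0) (Ne.symm hj)).2
    exact hLab ⟨x, (Finset.mem_inter.mp hx).1⟩
  -- there is a vertex w such that L is injective away from w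
  have hw : ∃ w : Fin k × Fin 2, ∀ u v : Fin k × Fin 2,
      u ≠ w → v ≠ w → L u = L v → u = v := by
    by_cases hLinj : Function.Injective L
    · exact ⟨(⟨0, by omega⟩, 0), fun u v _ _ h => hLinj h⟩
    · rw [Function.not_injective_iff] at hLinj
      obtain ⟨u, v, hL, hne⟩ := hLinj
      obtain ⟨huv1, huv2⟩ := collision u v hne hL
      refine ⟨v, fun p q hp hq hpq => ?_⟩
      by_contra hpqne
      obtain ⟨hpq1, hpq2⟩ := collision p q hpqne hpq
      -- both pairs interval-disjoint, so p.1 = u.1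
      have hsame : p.1 = u.1 := by
        by_contra hne2
        exact step1 p q u v hpq1 huv1 hne2 hpq2 huv2
      -- p, q ∈ {u, v}; p ≠ v, q ≠ v forces p = u = q
      have hu2v2 : u.2 ≠ v.2 := fun e => hne (Prod.ext huv1 e)
      have hpv : p.2 ≠ v.2 := fun e => hp (Prod.ext (hsame.trans huv1) e)
      have hqv : q.2 ≠ v.2 := fun e => hq (Prod.ext ((hpq1.symm.trans hsame).trans huv1) e)
      exact hpqne (Prod.ext hpq1 (fin2_eq_of_ne hpv hqv))
  obtain ⟨w, hw⟩ := hw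
  have hinj : Set.InjOn L ↑(Finset.univ.erase w) := by
    intro u hu v hv h
    simp only [Finset.coe_erase, Set.mem_diff, Set.mem_singleton_iff] at hu hv
    exact hw u v hu.2 hv.2 h
  calc 2 * k - 1 = (Finset.univ.erase w).card := by
        rw [Finset.card_erase_of_mem (Finset.mem_univ w), Finset.card_univ]
        simp [Fintype.card_prod]
        omega
    _ = ((Finset.univ.erase w).image L).card := (Finset.card_image_of_injOn hinj).symm
    _ ≤ Fintype.card (Finset (Fin d)) := Finset.card_le_univ _
    _ = 2 ^ d := by simp [Fintype.card_finset]

lemma exists_rep (k : ℕ) : ∃ a b L, IsSIRep (complementOfMatching k) (2 ^ k) a b L := by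
  classical
  have hcard : Fintype.card (Finset (Fin k)) = 2 ^ k := by
    simp [Fintype.card_finset]
  set e := Fintype.equivFinOfCardEq hcard with he
  refine ⟨fun _ => 0, fun _ => 1,
    fun v => Finset.univ.filter (fun x => (v.1 ∈ e.symm x ↔ v.2 = 0)), ?_, ?_⟩
  · intro v; norm_num
  · intro u v huv
    rw [adj_iff']
    constructor
    · intro h
      refine ⟨⟨(1:ℝ)/2, ⟨by norm_num, by norm_num⟩, by norm_num, by norm_num⟩, ?_⟩
      set S : Finset (Fin k) :=
        Finset.univ.filter (fun i => (i = u.1 ∧ u.2 = 0) ∨ (i = v.1 ∧ v.2 = 0)) with hS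
      refine ⟨e S, ?_⟩
      have hmem : ∀ i : Fin k, i ∈ S ↔ ((i = u.1 ∧ u.2 = 0) ∨ (i = v.1 ∧ v.2 = 0)) := by
        intro i; simp [hS]
      simp only [Finset.mem_inter, Finset.mem_filter, Finset.mem_univ, true_and,
        Equiv.symm_apply_apply]
      constructor
      · rw [hmem]
        constructor
        · rintro (⟨-, h2⟩ | ⟨h1, -⟩)
          · exact h2
          · exact absurd h1 h
        · intro h2; exact Or.inl ⟨rfl, h2⟩
      · rw [hmem]
        constructor
        · rintro (⟨h1, -⟩ | ⟨-, h2⟩)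
          · exact absurd h1.symm h
          · exact h2
        · intro h2; exact Or.inr ⟨rfl, h2⟩
    · rintro ⟨-, x, hx⟩
      intro h
      have h2 : u.2 ≠ v.2 := fun e2 => huv (Prod.ext h e2)
      simp only [Finset.mem_inter, Finset.mem_filter, Finset.mem_univ, true_and] at hx
      obtain ⟨hx1, hx2⟩ := hx
      rw [h] at hx1
      rw [hx2] at hx1
      omega

/-- If `G` is the complement of a perfect matching on `n = 2k ≥ 2` vertices,
then `si G ≥ log₂ (n - 1)`. -/
theorem logb_le_si_complementOfMatching (k : ℕ) (hk : 1 ≤ k) :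
    Real.logb 2 ((2 * k : ℝ) - 1) ≤ (si (complementOfMatching k) : ℝ) := by
  rcases eq_or_lt_of_le hk with h1 | hk2
  · have : (2 * k : ℝ) - 1 = 1 := by rw [← h1]; norm_num
    rw [this, Real.logb_one]
    exact Nat.cast_nonneg _
  · have hk2' : 2 ≤ k := hk2
    have hne : {d | ∃ a b L, IsSIRep (complementOfMatching k) d a b L}.Nonempty :=
      ⟨2 ^ k, exists_rep k⟩
    unfold si
    obtain ⟨A, B, L, hrep⟩ := Nat.sInf_mem hne
    have hb := rep_bound hk2' A B L hrep
    clear hrep L A B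
    set D := sInf {d | ∃ a b L, IsSIRep (complementOfMatching k) d a b L} with hD
    have hcast : (2 * k : ℝ) - 1 ≤ (2 : ℝ) ^ D := by
      have : ((2 * k - 1 : ℕ) : ℝ) ≤ ((2 ^ D : ℕ) : ℝ) := by exact_mod_cast hb
      push_cast [Nat.cast_sub (by omega : 1 ≤ 2 * k)] at this
      linarith
    have hpos : (0 : ℝ) < (2 * k : ℝ) - 1 := by
      have : (1 : ℝ) ≤ (k : ℝ) := by exact_mod_cast hk
      linarith
    calc Real.logb 2 ((2 * k : ℝ) - 1) ≤ Real.logb 2 ((2 : ℝ) ^ D) :=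
          Real.logb_le_logb_of_le (by norm_num) hpos hcast
      _ = D := by
          rw [Real.logb_pow, Real.logb_self_eq_one (by norm_num)]
          ring
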